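/- Fix ρ ∈ (0,1), κ > 0, N1 ≥ N2 > 0, and D2 ∈ (0, 1−ρ²]. For D1 ∈ (0,1) define Pρ(D1) := N1·(D1^{−1/κ} − 1) + N2·D1^{−1/κ}·(((1 − ρ²·(1−D1))/D2)^{1/κ} − 1) and P_ob(D1) := N1·(D1^{−1/κ} − 1) + N2·D1^{−1/κ}·(((1−ρ²)/D2)^{1/κ} − 1). Then the ratio Pρ(D1)/P_ob(D1) tends to 1 as D1 → 0 from the right. -/

import Mathlib

open Filter Real Set

/-- Fix `ρ ∈ (0,1)`, `κ > 0`, `N1 ≥ N2 > 0`, `D2 ∈ (0, 1−ρ²]`. With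
`Pρ(D1) = N1(D1^{−1/κ} − 1) + N2·D1^{−1/κ}·(((1 − ρ²(1−D1))/D2)^{1/κ} − 1)` and
`P_ob(D1) = N1(D1^{−1/κ} − 1) + N2·D1^{−1/κ}·(((1−ρ²)/D2)^{1/κ} − 1)`, the ratio
`Pρ(D1)/P_ob(D1) → 1` as `D1 → 0⁺`. -/
theorem ratio_tendsto_one_as_D1_to_zero (ρ κ N1 N2 D2 : ℝ)
    (hρ : ρ ∈ Set.Ioo (0 : ℝ) 1) (hκ : 0 < κ) (hN2 : 0 < N2) (hN : N2 ≤ N1)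
    (hD2 : D2 ∈ Set.Ioc (0 : ℝ) (1 - ρ ^ 2)) :
    Filter.Tendsto (fun D1 : ℝ =>
        (N1 * (D1 ^ (-1 / κ) - 1)
            + N2 * D1 ^ (-1 / κ) * (((1 - ρ ^ 2 * (1 - D1)) / D2) ^ (1 / κ) - 1)) /
        (N1 * (D1 ^ (-1 / κ) - 1)
            + N2 * D1 ^ (-1 / κ) * (((1 - ρ ^ 2) / D2) ^ (1 / κ) - 1)))
      (nhdsWithin 0 (Set.Ioi 0)) (nhds 1) := by
  obtain ⟨hρ0, hρ1⟩ := hρ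
  obtain ⟨hD2pos, hD2le⟩ := hD2
  have hN1 : 0 < N1 := lt_of_lt_of_le hN2 hN
  have hρ2 : (0:ℝ) < 1 - ρ ^ 2 := by nlinarith
  have hκ' : (0:ℝ) < 1 / κ := by positivity
  set L : ℝ := N1 + N2 * (((1 - ρ ^ 2) / D2) ^ (1 / κ) - 1) with hLdef
  have hone : (1:ℝ) ≤ (1 - ρ ^ 2) / D2 := (one_le_div hD2pos).2 hD2le
  have hrpge : (1:ℝ) ≤ ((1 - ρ ^ 2) / D2) ^ (1 / κ) :=
    Real.one_le_rpow hone hκ'.le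
  have hLpos : 0 < L := by rw [hLdef]; nlinarith
  -- limit of D1 ^ (1/κ) at 0⁺ is 0
  have ht : Tendsto (fun D1 : ℝ => D1 ^ (1 / κ)) (nhdsWithin 0 (Set.Ioi 0)) (nhds 0) := by
    have h0 : ((0:ℝ) ^ (1 / κ) : ℝ) = 0 := Real.zero_rpow (ne_of_gt hκ')
    have := (Real.continuousAt_rpow_const 0 (1 / κ) (Or.inr hκ'.le)).continuousWithinAt
      (s := Set.Ioi (0:ℝ))
    rw [ContinuousWithinAt, h0] at this
    exact this
  -- limit of the varying rpow term
  have hA : Tendsto (fun D1 : ℝ => ((1 - ρ ^ 2 * (1 - D1)) / D2) ^ (1 / κ))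
      (nhdsWithin 0 (Set.Ioi 0)) (nhds (((1 - ρ ^ 2) / D2) ^ (1 / κ))) := by
    have hb : ContinuousAt (fun D1 : ℝ => (1 - ρ ^ 2 * (1 - D1)) / D2) 0 := by
      fun_prop
    have hb0 : (1 - ρ ^ 2 * (1 - (0:ℝ))) / D2 ≠ 0 := by
      simp only [sub_zero, mul_one]
      positivity
    have := (hb.rpow_const (p := 1 / κ) (Or.inl hb0)).continuousWithinAt (s := Set.Ioi (0:ℝ))
    have h0 : (1 - ρ ^ 2 * (1 - (0:ℝ))) / D2 = (1 - ρ ^ 2) / D2 := by ring_nf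
    rw [ContinuousWithinAt] at this
    simpa [h0] using this
  -- numerator and denominator after normalization
  have hg : Tendsto (fun D1 : ℝ =>
      N1 * (1 - D1 ^ (1 / κ)) + N2 * (((1 - ρ ^ 2 * (1 - D1)) / D2) ^ (1 / κ) - 1))
      (nhdsWithin 0 (Set.Ioi 0)) (nhds L) := by
    have : Tendsto (fun D1 : ℝ => N1 * (1 - D1 ^ (1 / κ))
        + N2 * (((1 - ρ ^ 2 * (1 - D1)) / D2) ^ (1 / κ) - 1))
        (nhdsWithin 0 (Set.Ioi 0))
        (nhds (N1 * (1 - 0) + N2 * (((1 - ρ ^ 2) / D2) ^ (1 / κ) - 1))) :=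
      ((tendsto_const_nhds.sub ht).const_mul N1).add ((hA.sub tendsto_const_nhds).const_mul N2)
    simpa [hLdef] using this
  have hh : Tendsto (fun D1 : ℝ =>
      N1 * (1 - D1 ^ (1 / κ)) + N2 * (((1 - ρ ^ 2) / D2) ^ (1 / κ) - 1))
      (nhdsWithin 0 (Set.Ioi 0)) (nhds L) := by
    have : Tendsto (fun D1 : ℝ => N1 * (1 - D1 ^ (1 / κ))
        + N2 * (((1 - ρ ^ 2) / D2) ^ (1 / κ) - 1))
        (nhdsWithin 0 (Set.Ioi 0))
        (nhds (N1 * (1 - 0) + N2 * (((1 - ρ ^ 2) / D2) ^ (1 / κ) - 1))) :=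
      ((tendsto_const_nhds.sub ht).const_mul N1).add tendsto_const_nhds
    simpa [hLdef] using this
  have hdiv : Tendsto (fun D1 : ℝ =>
      (N1 * (1 - D1 ^ (1 / κ)) + N2 * (((1 - ρ ^ 2 * (1 - D1)) / D2) ^ (1 / κ) - 1)) /
      (N1 * (1 - D1 ^ (1 / κ)) + N2 * (((1 - ρ ^ 2) / D2) ^ (1 / κ) - 1)))
      (nhdsWithin 0 (Set.Ioi 0)) (nhds 1) := by
    have := hg.div hh (ne_of_gt hLpos)
    rw [div_self (ne_of_gt hLpos)] at this
    exact this
  refine hdiv.congr' ?_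
  filter_upwards [self_mem_nhdsWithin] with x hx
  have hx0 : (0:ℝ) < x := hx
  have hxk : (0:ℝ) < x ^ (1 / κ) := Real.rpow_pos_of_pos hx0 _
  have key : x ^ (-1 / κ) * x ^ (1 / κ) = 1 := by
    have e : -1 / κ + 1 / κ = 0 := by ring
    rw [← Real.rpow_add hx0, e, Real.rpow_zero]
  rw [eq_comm, ← mul_div_mul_right _ _ (ne_of_gt hxk)]
  congr 1
  · linear_combination (N1 + N2 * (((1 - ρ ^ 2 * (1 - x)) / D2) ^ (1 / κ) - 1)) * key
  · linear_combination (N1 + N2 * (((1 - ρ ^ 2) / D2) ^ (1 / κ) - 1)) * key
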